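/- arXiv:0811.1384 — 3 statements merged into one kernel-verified Lean document; each statement's English description precedes it below -/
import Mathlib

section
/- (Fiberwise form of the lemma that the induced pairing P is (−1)^w-symmetric.) With the fiberwise data of a twistor-TERP structure as in the context (integer w; complex vector spaces A, B, C, D; maps κ₁, κ₂, κ₃, κ₄ with κ₁∘κ₃ = id_A, κ₃∘κ₁ = id_C, κ₂∘κ₄ = id_B, κ₄∘κ₂ = id_D; maps S₁, S₂, S₃, S₄ satisfying the (−1)^w-symmetry identities conj(S₄ d a) = (−1)^w · S₁ a d and conj(S₃ c b) = (−1)^w · S₂ b c, and the compatibility identities conj(S₃ c b) = S₁ (κ₁ c) (κ₄ b) and conj(S₄ d a) = S₂ (κ₂ d) (κ₃ a)), define P₁ a b = i^w · S₁ a (κ₄ b), P₂ b a = i^w · S₂ b (κ₃ a), P₃ c d = i^w · S₃ c (κ₂ d), P₄ d c = i^w · S₄ d (κ₁ c). Then P is (−1)^w-symmetric: P₂ b a = (−1)^w · P₁ a b for all a ∈ A, b ∈ B, and P₄ d c = (−1)^w · P₃ c d for all c ∈ C, d ∈ D. -/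
open Complex

/-- fiberwise form of the lemma that the pairing
P = i^w · 𝒮 ∘ (1 ⊗ σ*κ) induced by a twistor-TERP structure is
(−1)^w-symmetric. -/
theorem induced_pairing_P_symmetric (w : ℤ)
    {A B C D : Type*}
    [AddCommGroup A] [Module ℂ A] [AddCommGroup B] [Module ℂ B]
    [AddCommGroup C] [Module ℂ C] [AddCommGroup D] [Module ℂ D]
    -- the real structure κ
    (κ₁ : C → A) (κ₂ : D → B) (κ₃ : A → C) (κ₄ : B → D)
    (hκ₁₃ : ∀ a, κ₁ (κ₃ a) = a) (hκ₃₁ : ∀ c, κ₃ (κ₁ c) = c)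
    (hκ₂₄ : ∀ b, κ₂ (κ₄ b) = b) (hκ₄₂ : ∀ d, κ₄ (κ₂ d) = d)
    -- the pairing 𝒮 of weight w
    (S₁ : A → D → ℂ) (S₂ : B → C → ℂ) (S₃ : C → B → ℂ) (S₄ : D → A → ℂ)
    -- (−1)^w-symmetry of 𝒮
    (hSsym₁ : ∀ a d, (starRingEnd ℂ) (S₄ d a) = (-1 : ℂ) ^ w * S₁ a d)
    (hSsym₂ : ∀ b c, (starRingEnd ℂ) (S₃ c b) = (-1 : ℂ) ^ w * S₂ b c)
    -- compatibility of 𝒮 and κ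
    (hSκ₁ : ∀ c b, (starRingEnd ℂ) (S₃ c b) = S₁ (κ₁ c) (κ₄ b))
    (hSκ₂ : ∀ d a, (starRingEnd ℂ) (S₄ d a) = S₂ (κ₂ d) (κ₃ a))
    -- the induced pairing P = i^w · 𝒮 ∘ (1 ⊗ σ*κ)
    (P₁ : A → B → ℂ) (P₂ : B → A → ℂ) (P₃ : C → D → ℂ) (P₄ : D → C → ℂ)
    (hP₁ : ∀ a b, P₁ a b = Complex.I ^ w * S₁ a (κ₄ b))
    (hP₂ : ∀ b a, P₂ b a = Complex.I ^ w * S₂ b (κ₃ a))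
    (hP₃ : ∀ c d, P₃ c d = Complex.I ^ w * S₃ c (κ₂ d))
    (hP₄ : ∀ d c, P₄ d c = Complex.I ^ w * S₄ d (κ₁ c)) :
    (∀ (a : A) (b : B), P₂ b a = (-1 : ℂ) ^ w * P₁ a b) ∧
    (∀ (c : C) (d : D), P₄ d c = (-1 : ℂ) ^ w * P₃ c d) := by
  have hsq : (-1 : ℂ) ^ w * (-1 : ℂ) ^ w = 1 := by
    rw [← zpow_add₀ (by norm_num : (-1:ℂ) ≠ 0)]
    exact Even.neg_one_zpow ⟨w, rfl⟩
  have hconjneg : (starRingEnd ℂ) ((-1 : ℂ) ^ w) = (-1 : ℂ) ^ w := by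
    rw [map_zpow₀]; norm_num
  constructor
  · intro a b
    have h1 : S₂ b (κ₃ a) = (starRingEnd ℂ) (S₄ (κ₄ b) a) := by
      rw [hSκ₂, hκ₂₄]
    rw [hP₂, hP₁, h1, hSsym₁]
    ring
  · intro c d
    have h1 : S₂ (κ₂ d) c = (starRingEnd ℂ) (S₄ d (κ₁ c)) := by
      rw [hSκ₂, hκ₃₁]
    have h2 := hSsym₂ (κ₂ d) c
    rw [h1] at h2
    have h3 := congrArg (starRingEnd ℂ) h2
    rw [Complex.conj_conj, map_mul, hconjneg, Complex.conj_conj] at h3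
    have h4 : S₄ d (κ₁ c) = (-1 : ℂ) ^ w * S₃ c (κ₂ d) := by
      rw [h3, ← mul_assoc, hsq, one_mul]
    rw [hP₄, hP₃, h4]
    ring
end

section
/- (Fiberwise form of the lemma that P is compatible with the real structure κ.) With the fiberwise data of a twistor-TERP structure as in the context (integer w; complex vector spaces A, B, C, D; maps κ₁, κ₂, κ₃, κ₄ with κ₁∘κ₃ = id_A, κ₃∘κ₁ = id_C, κ₂∘κ₄ = id_B, κ₄∘κ₂ = id_D; maps S₁, S₂, S₃, S₄ satisfying the (−1)^w-symmetry identities conj(S₄ d a) = (−1)^w · S₁ a d and conj(S₃ c b) = (−1)^w · S₂ b c, and the compatibility identities conj(S₃ c b) = S₁ (κ₁ c) (κ₄ b) and conj(S₄ d a) = S₂ (κ₂ d) (κ₃ a)), define P₁ a b = i^w · S₁ a (κ₄ b), P₂ b a = i^w · S₂ b (κ₃ a), P₃ c d = i^w · S₃ c (κ₂ d), P₄ d c = i^w · S₄ d (κ₁ c). Then (−1)^w · P₁ (κ₁ c) (κ₂ d) = conj(P₃ c d) for all c ∈ C, d ∈ D, and (−1)^w · P₂ (κ₂ d) (κ₁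 c) = conj(P₄ d c) for all c ∈ C, d ∈ D. -/
open Complex


lemma conj_I_zpow (w : ℤ) :
    (starRingEnd ℂ) (Complex.I ^ w) = (-1 : ℂ) ^ w * Complex.I ^ w := by
  rw [map_zpow₀, Complex.conj_I, ← mul_zpow]
  norm_num

/-- fiberwise form of the lemma that the pairing
P = i^w · 𝒮 ∘ (1 ⊗ σ*κ) induced by a twistor-TERP structure is compatible
with the real structure κ: (−1)^w · P ∘ (κ ⊗ j*κ) = κ_{𝕋(−w)} ∘ γ*P. -/
theorem induced_pairing_P_compatible_with_kappa (w : ℤ)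
    {A B C D : Type*}
    [AddCommGroup A] [Module ℂ A] [AddCommGroup B] [Module ℂ B]
    [AddCommGroup C] [Module ℂ C] [AddCommGroup D] [Module ℂ D]
    -- the real structure κ
    (κ₁ : C → A) (κ₂ : D → B) (κ₃ : A → C) (κ₄ : B → D)
    (hκ₁₃ : ∀ a, κ₁ (κ₃ a) = a) (hκ₃₁ : ∀ c, κ₃ (κ₁ c) = c)
    (hκ₂₄ : ∀ b, κ₂ (κ₄ b) = b) (hκ₄₂ : ∀ d, κ₄ (κ₂ d) = d)
    -- the pairing 𝒮 of weight w
    (S₁ : A → D → ℂ) (S₂ : B → C → ℂ) (S₃ : C → B → ℂ) (S₄ : D → A → ℂ)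
    -- (−1)^w-symmetry of 𝒮
    (hSsym₁ : ∀ a d, (starRingEnd ℂ) (S₄ d a) = (-1 : ℂ) ^ w * S₁ a d)
    (hSsym₂ : ∀ b c, (starRingEnd ℂ) (S₃ c b) = (-1 : ℂ) ^ w * S₂ b c)
    -- compatibility of 𝒮 and κ
    (hSκ₁ : ∀ c b, (starRingEnd ℂ) (S₃ c b) = S₁ (κ₁ c) (κ₄ b))
    (hSκ₂ : ∀ d a, (starRingEnd ℂ) (S₄ d a) = S₂ (κ₂ d) (κ₃ a))
    -- the induced pairing P = i^w · 𝒮 ∘ (1 ⊗ σ*κ)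
    (P₁ : A → B → ℂ) (P₂ : B → A → ℂ) (P₃ : C → D → ℂ) (P₄ : D → C → ℂ)
    (hP₁ : ∀ a b, P₁ a b = Complex.I ^ w * S₁ a (κ₄ b))
    (hP₂ : ∀ b a, P₂ b a = Complex.I ^ w * S₂ b (κ₃ a))
    (hP₃ : ∀ c d, P₃ c d = Complex.I ^ w * S₃ c (κ₂ d))
    (hP₄ : ∀ d c, P₄ d c = Complex.I ^ w * S₄ d (κ₁ c)) :
    (∀ (c : C) (d : D), (-1 : ℂ) ^ w * P₁ (κ₁ c) (κ₂ d) = (starRingEnd ℂ) (P₃ c d)) ∧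
    (∀ (c : C) (d : D), (-1 : ℂ) ^ w * P₂ (κ₂ d) (κ₁ c) = (starRingEnd ℂ) (P₄ d c)) := by
  constructor
  · intro c d
    rw [hP₁, hP₃, map_mul, conj_I_zpow, hSκ₁, hκ₄₂]
    ring
  · intro c d
    rw [hP₂, hP₄, map_mul, conj_I_zpow, hSκ₂, hκ₃₁]
    ring
end

section
/- (Converse construction: the pairing 𝒮 built from P and κ is (−1)^w-symmetric and compatible with κ.) With the fiberwise data as in the context, suppose the maps P₁ : A → B → ℂ, P₂ : B → A → ℂ, P₃ : C → D → ℂ, P₄ : D → C → ℂ satisfy the (−1)^w-symmetry identities P₂ b a = (−1)^w · P₁ a b and P₄ d c = (−1)^w · P₃ c d, together with the reality identities (−1)^w · P₁ (κ₁ c) (κ₂ d) = conj(P₃ c d) and (−1)^w · P₂ (κ₂ d) (κ₁ c) = conj(P₄ d c). Define S₁ a d = i^{−w} · P₁ a (κ₂ d), S₂ b c = i^{−w} · P₂ b (κ₁ c), S₃ c b = i^{−w} · P₃ c (κ₄ b), S₄ d a = i^{−w} · P₄ d (κ₃ a). Then S satisfies the (−1)^w-symmetry identities conj(S₄ d a)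 = (−1)^w · S₁ a d and conj(S₃ c b) = (−1)^w · S₂ b c, and the compatibility identities conj(S₃ c b) = S₁ (κ₁ c) (κ₄ b) and conj(S₄ d a) = S₂ (κ₂ d) (κ₃ a), for all a ∈ A, b ∈ B, c ∈ C, d ∈ D. -/
open Complex

lemma neg_one_zpow_mul_self (w : ℤ) : (-1 : ℂ) ^ w * (-1 : ℂ) ^ w = 1 := by
  rw [← mul_zpow]; norm_num

lemma conj_I_zpow_neg (w : ℤ) :
    (starRingEnd ℂ) (Complex.I ^ (-w)) = (-1 : ℂ) ^ w * Complex.I ^ (-w) := by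
  rw [map_zpow₀, Complex.conj_I, show (-Complex.I) = (-1) * Complex.I by ring,
    mul_zpow, zpow_neg (-1 : ℂ) w]
  congr 1
  exact inv_eq_of_mul_eq_one_left (neg_one_zpow_mul_self w)

/-- converse construction. The pairing 𝒮 built from the pairing P
and the real structure κ via S = i^{−w} · P ∘ (1 ⊗ j*κ⁻¹) (fiberwise
S₁ a d = i^{−w}·P₁ a (κ₂ d), etc.) is (−1)^w-symmetric and compatible with κ. -/
theorem pairing_S_from_P_symmetric_and_compatible (w : ℤ)
    {A B C D : Type*}
    [AddCommGroup A] [Module ℂ A] [AddCommGroup B] [Module ℂ B]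
    [AddCommGroup C] [Module ℂ C] [AddCommGroup D] [Module ℂ D]
    -- the real structure κ
    (κ₁ : C → A) (κ₂ : D → B) (κ₃ : A → C) (κ₄ : B → D)
    (hκ₁₃ : ∀ a, κ₁ (κ₃ a) = a) (hκ₃₁ : ∀ c, κ₃ (κ₁ c) = c)
    (hκ₂₄ : ∀ b, κ₂ (κ₄ b) = b) (hκ₄₂ : ∀ d, κ₄ (κ₂ d) = d)
    -- the pairing P
    (P₁ : A → B → ℂ) (P₂ : B → A → ℂ) (P₃ : C → D → ℂ) (P₄ : D → C → ℂ)
    -- (−1)^w-symmetry of P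
    (hPsym₁ : ∀ (a : A) (b : B), P₂ b a = (-1 : ℂ) ^ w * P₁ a b)
    (hPsym₂ : ∀ (c : C) (d : D), P₄ d c = (-1 : ℂ) ^ w * P₃ c d)
    -- reality of P
    (hPreal₁ : ∀ (c : C) (d : D),
      (-1 : ℂ) ^ w * P₁ (κ₁ c) (κ₂ d) = (starRingEnd ℂ) (P₃ c d))
    (hPreal₂ : ∀ (c : C) (d : D),
      (-1 : ℂ) ^ w * P₂ (κ₂ d) (κ₁ c) = (starRingEnd ℂ) (P₄ d c))
    -- the pairing 𝒮 recovered from P and κ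
    (S₁ : A → D → ℂ) (S₂ : B → C → ℂ) (S₃ : C → B → ℂ) (S₄ : D → A → ℂ)
    (hS₁ : ∀ a d, S₁ a d = Complex.I ^ (-w) * P₁ a (κ₂ d))
    (hS₂ : ∀ b c, S₂ b c = Complex.I ^ (-w) * P₂ b (κ₁ c))
    (hS₃ : ∀ c b, S₃ c b = Complex.I ^ (-w) * P₃ c (κ₄ b))
    (hS₄ : ∀ d a, S₄ d a = Complex.I ^ (-w) * P₄ d (κ₃ a)) :
    -- (−1)^w-symmetry of 𝒮
    (∀ (a : A) (d : D), (starRingEnd ℂ) (S₄ d a) = (-1 : ℂ) ^ w * S₁ a d) ∧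
    (∀ (b : B) (c : C), (starRingEnd ℂ) (S₃ c b) = (-1 : ℂ) ^ w * S₂ b c) ∧
    -- compatibility of 𝒮 and κ
    (∀ (c : C) (b : B), (starRingEnd ℂ) (S₃ c b) = S₁ (κ₁ c) (κ₄ b)) ∧
    (∀ (d : D) (a : A), (starRingEnd ℂ) (S₄ d a) = S₂ (κ₂ d) (κ₃ a)) := by
  have h1 := neg_one_zpow_mul_self w
  have hc := conj_I_zpow_neg w
  have key₄ : ∀ (d : D) (a : A),
      (starRingEnd ℂ) (S₄ d a) = Complex.I ^ (-w) * P₂ (κ₂ d) (κ₁ (κ₃ a)) := by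
    intro d a
    rw [hS₄, map_mul, hc, ← hPreal₂ (κ₃ a) d]
    linear_combination Complex.I ^ (-w) * P₂ (κ₂ d) (κ₁ (κ₃ a)) * neg_one_zpow_mul_self w
  have key₃ : ∀ (c : C) (b : B),
      (starRingEnd ℂ) (S₃ c b) = Complex.I ^ (-w) * P₁ (κ₁ c) (κ₂ (κ₄ b)) := by
    intro c b
    rw [hS₃, map_mul, hc, ← hPreal₁ c (κ₄ b)]
    linear_combination Complex.I ^ (-w) * P₁ (κ₁ c) (κ₂ (κ₄ b)) * neg_one_zpow_mul_self w
  refine ⟨?_, ?_, ?_, ?_⟩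
  · intro a d
    rw [key₄, hκ₁₃, hPsym₁, hS₁]
    ring
  · intro b c
    rw [key₃, hκ₂₄, hS₂, hPsym₁]
    linear_combination Complex.I ^ (-w) * P₁ (κ₁ c) b - Complex.I ^ (-w) * P₁ (κ₁ c) b * neg_one_zpow_mul_self w
  · intro c b
    rw [key₃, hS₁, hκ₂₄]
  · intro d a
    rw [key₄, hS₂]
end
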